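/- Let n ≥ 1 and let (a_N)_{N≥0} = (a_{1,N},…,a_{n,N}) be a sequence of vectors of positive reals with lim_{N→∞} a_N/N = (α_1,…,α_n) where α_i > 0 for every i. Let Z_N := ∫_{D̃} x_1^{a_{1,N}−1}⋯x_{n−1}^{a_{n−1,N}−1}(1−x_1−⋯−x_{n−1})^{a_{n,N}−1} dx_1⋯dx_{n−1}, where D̃ = {x ∈ ℝ^{n−1} : x_i > 0, x_1+⋯+x_{n−1} < 1}. Then lim_{N→∞} (1/N) log Z_N = max over y ∈ ℝ^n with y_i > 0 and Σy_i = 1 of Σ_{i=1}^n α_i log y_i. In particular, if Σα_i = 1 this limit equals Σ_{i=1}^n α_i log α_i. -/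

import Mathlib

open MeasureTheory Filter

noncomputable section

/-- Weighted Gibbs inequality: for positive weights `β` and positive `x` with `∑ x ≤ 1`,
`∑ βᵢ log xᵢ ≤ ∑ βᵢ log (βᵢ / ∑ β)`. -/
lemma gibbs_ineq {ι : Type*} [Fintype ι] (β x : ι → ℝ) (hβ : ∀ i, 0 < β i)
    (hx : ∀ i, 0 < x i) (hs : ∑ i, x i ≤ 1) :
    ∑ i, β i * Real.log (x i) ≤ ∑ i, β i * Real.log (β i / ∑ j, β j) := by
  rcases isEmpty_or_nonempty ι with h | h
  · simp
  set B := ∑ j, β j with hB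
  have hBpos : 0 < B := Finset.sum_pos (fun i _ => hβ i) Finset.univ_nonempty
  have key : ∀ i, β i * Real.log (x i) - β i * Real.log (β i / B) ≤ B * x i - β i := by
    intro i
    have hβi := hβ i
    have hxi := hx i
    have h1 : Real.log (x i) - Real.log (β i / B) = Real.log (x i * B / β i) := by
      rw [Real.log_div (by positivity) (by positivity),
        Real.log_div (by positivity) (by positivity),
        Real.log_mul (by positivity) (by positivity)]
      ring
    have h2 : Real.log (x i * B / β i) ≤ x i * B / β i - 1 :=
      Real.log_le_sub_one_of_pos (by positivity)
    have h3 : β i * (x i * B / β i - 1) = B * x i - β i := by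
      field_simp
    calc β i * Real.log (x i) - β i * Real.log (β i / B)
        = β i * Real.log (x i * B / β i) := by rw [← h1]; ring
      _ ≤ β i * (x i * B / β i - 1) := by nlinarith
      _ = B * x i - β i := h3
  have hsum := Finset.sum_le_sum (fun i (_ : i ∈ Finset.univ) => key i)
  rw [Finset.sum_sub_distrib, Finset.sum_sub_distrib, ← Finset.mul_sum] at hsum
  have : B * ∑ i, x i ≤ B := by
    calc B * ∑ i, x i ≤ B * 1 := mul_le_mul_of_nonneg_left hs hBpos.le
      _ = B := mul_one B
  linarith

/-- The Dirichlet normalizing integral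
`Z = ∫_{D̃} x₁^{a₁−1} ⋯ x_{n−1}^{a_{n−1}−1} (1 − x₁ − ⋯ − x_{n−1})^{aₙ−1} dx`
over `D̃ = {x ∈ ℝ^{n−1} : xᵢ > 0, Σ xᵢ < 1}`, with `n = m + 1`. -/
def dirichletZ (m : ℕ) (a : Fin (m + 1) → ℝ) : ℝ :=
  ∫ x : Fin m → ℝ in {x | (∀ i, 0 < x i) ∧ ∑ i, x i < 1},
    (∏ i : Fin m, x i ^ (a i.castSucc - 1)) * (1 - ∑ i, x i) ^ (a (Fin.last m) - 1)

set_option maxHeartbeats 2000000 in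
/-- If `a_N ∈ (0,∞)ⁿ` (with `n = m+1 ≥ 1`) satisfies `a_N / N → α` with
all `αᵢ > 0`, then `(1/N) log Z_N` converges to
`max { Σᵢ αᵢ log yᵢ : yᵢ > 0, Σ yᵢ = 1 }`; in particular when `Σ αᵢ = 1` the limit is
`Σᵢ αᵢ log αᵢ`. -/
theorem dirichlet_normalizer_laplace_asymptotics
    (m : ℕ) (a : ℕ → Fin (m + 1) → ℝ) (hapos : ∀ N i, 0 < a N i)
    (α : Fin (m + 1) → ℝ) (hαpos : ∀ i, 0 < α i)
    (hlim : ∀ i, Tendsto (fun N : ℕ => a N i / (N : ℝ)) atTop (nhds (α i))) :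
    ∃ L : ℝ,
      IsGreatest {r : ℝ | ∃ y : Fin (m + 1) → ℝ,
          (∀ i, 0 < y i) ∧ ∑ i, y i = 1 ∧ r = ∑ i, α i * Real.log (y i)} L ∧
      Tendsto (fun N : ℕ => Real.log (dirichletZ m (a N)) / (N : ℝ)) atTop (nhds L) ∧
      ((∑ i, α i = 1) → L = ∑ i, α i * Real.log (α i)) := by
  have hSpos : 0 < ∑ i, α i := Finset.sum_pos (fun i _ => hαpos i) Finset.univ_nonempty
  set S := ∑ i, α i with hS
  set L := ∑ i, α i * Real.log (α i / S) with hL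
  refine ⟨L, ⟨⟨fun i => α i / S, fun i => div_pos (hαpos i) hSpos, ?_, rfl⟩, ?_⟩, ?_, ?_⟩
  · rw [← Finset.sum_div]; exact div_self hSpos.ne'
  · rintro r ⟨y, hy, hsum, rfl⟩
    exact gibbs_ineq α y hαpos hy hsum.le
  · -- the main convergence statement
    -- convergence of `(a N i - 1)/N`
    have h1 : ∀ i : Fin (m+1), Tendsto (fun N : ℕ => (a N i - 1)/(N:ℝ)) atTop (nhds (α i)) := by
      intro i
      have := (hlim i).sub (tendsto_const_div_atTop_nhds_zero_nat 1)
      simpa [sub_div] using this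
    have hAtop : ∀ i : Fin (m+1), Tendsto (fun N : ℕ => a N i) atTop atTop := fun i =>
      Tendsto.num tendsto_natCast_atTop_atTop (hαpos i) (hlim i)
    have hEa : ∀ᶠ N in atTop, ∀ i, 1 < a N i :=
      eventually_all.mpr fun i => (hAtop i).eventually_gt_atTop 1
    -- the upper comparison sequence
    set u : ℕ → ℝ := fun N => ∑ i : Fin (m+1),
      ((a N i - 1)/(N:ℝ)) * Real.log (((a N i - 1)/(N:ℝ)) / (∑ j, (a N j - 1)/(N:ℝ))) with hu
    have hBt : Tendsto (fun N : ℕ => ∑ j, (a N j - 1)/(N:ℝ)) atTop (nhds S) := by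
      rw [hS]
      exact tendsto_finset_sum _ fun j _ => h1 j
    have hu_tend : Tendsto u atTop (nhds L) := by
      rw [hu, hL]
      apply tendsto_finset_sum
      intro i _
      exact (h1 i).mul
        (((Real.continuousAt_log (div_pos (hαpos i) hSpos).ne').tendsto).comp
          ((h1 i).div hBt hSpos.ne'))
    have hTu : ∀ N : ℕ, 1 ≤ N →
        (∑ i : Fin (m+1), (a N i - 1) * Real.log ((a N i - 1) / ∑ j, (a N j - 1))) / (N:ℝ)
          = u N := by
      intro N hN
      have hN0 : (N:ℝ) ≠ 0 := Nat.cast_ne_zero.mpr (by omega)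
      rw [hu, Finset.sum_div]
      refine Finset.sum_congr rfl fun i _ => ?_
      rw [← Finset.sum_div]
      have harg : ((a N i - 1)/(N:ℝ)) / ((∑ j, (a N j - 1))/(N:ℝ))
          = (a N i - 1) / ∑ j, (a N j - 1) := by
        rw [div_div_div_cancel_right₀]
        exact hN0
      rw [harg, mul_div_right_comm]
    rw [Metric.tendsto_nhds]
    intro δ hδ
    -- choice of ε for the lower bound
    set g : ℝ → ℝ := fun ε =>
      (∑ i : Fin m, α i.castSucc * Real.log (α i.castSucc / S - ε))
        + α (Fin.last m) * Real.log (α (Fin.last m) / S) with hg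
    have hg0 : g 0 = L := by
      rw [hg, hL, Fin.sum_univ_castSucc]
      simp
    have hgc : ContinuousAt g 0 := by
      apply ContinuousAt.add _ continuousAt_const
      apply tendsto_finset_sum
      intro i _
      apply ContinuousAt.mul continuousAt_const
      have hpos : (0:ℝ) < α i.castSucc / S := div_pos (hαpos _) hSpos
      have hc : ContinuousAt (fun ε : ℝ => α i.castSucc / S - ε) 0 := by fun_prop
      have hl : ContinuousAt Real.log ((fun ε : ℝ => α i.castSucc / S - ε) 0) :=
        Real.continuousAt_log (by simpa using hpos.ne')
      exact hl.comp hc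
    have hev1 : ∀ᶠ ε in nhds (0:ℝ), L - δ/2 < g ε :=
      hgc.eventually (eventually_gt_nhds (by rw [hg0]; linarith))
    have hev2 : ∀ᶠ ε in nhds (0:ℝ), ∀ i : Fin m, ε < α i.castSucc / S :=
      eventually_all.mpr fun i => eventually_lt_nhds (div_pos (hαpos _) hSpos)
    obtain ⟨ε, ⟨hgε, hεsmall⟩, hε0⟩ :=
      (((hev1.and hev2).filter_mono nhdsWithin_le_nhds).and
        (eventually_mem_nhdsWithin (s := Set.Ioi (0:ℝ)))).exists
    rw [Set.mem_Ioi] at hε0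
    simp only [hg] at hgε
    -- the lower comparison sequence
    set lo : ℕ → ℝ := fun N =>
      (∑ i : Fin m, ((a N i.castSucc - 1)/(N:ℝ)) * Real.log (α i.castSucc / S - ε))
        + ((a N (Fin.last m) - 1)/(N:ℝ)) * Real.log (α (Fin.last m) / S)
        + ((m:ℝ) * Real.log ε)/(N:ℝ) with hlo
    have hlo_tend : Tendsto lo atTop (nhds
        ((∑ i : Fin m, α i.castSucc * Real.log (α i.castSucc / S - ε))
          + α (Fin.last m) * Real.log (α (Fin.last m) / S))) := by
      rw [hlo]
      have t1 : Tendsto (fun N : ℕ => ∑ i : Fin m,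
          ((a N i.castSucc - 1)/(N:ℝ)) * Real.log (α i.castSucc / S - ε)) atTop
          (nhds (∑ i : Fin m, α i.castSucc * Real.log (α i.castSucc / S - ε))) :=
        tendsto_finset_sum _ fun i _ => (h1 i.castSucc).mul_const _
      have t2 : Tendsto (fun N : ℕ => ((a N (Fin.last m) - 1)/(N:ℝ)) *
          Real.log (α (Fin.last m) / S)) atTop
          (nhds (α (Fin.last m) * Real.log (α (Fin.last m) / S))) :=
        (h1 (Fin.last m)).mul_const _
      have t3 : Tendsto (fun N : ℕ => ((m:ℝ) * Real.log ε)/(N:ℝ)) atTop (nhds 0) :=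
        tendsto_const_div_atTop_nhds_zero_nat _
      simpa using (t1.add t2).add t3
    have hlo_ev : ∀ᶠ N in atTop, L - δ/2 < lo N :=
      hlo_tend.eventually (eventually_gt_nhds hgε)
    have hup_ev : ∀ᶠ N in atTop, u N < L + δ/2 :=
      hu_tend.eventually (eventually_lt_nhds (by linarith))
    filter_upwards [hEa, eventually_ge_atTop 1, hlo_ev, hup_ev] with N hb hN1 hloN hupN
    -- per-N setup
    have hβ : ∀ i, 0 < a N i - 1 := fun i => by linarith [hb i]
    have hNpos : (0:ℝ) < (N:ℝ) := by exact_mod_cast Nat.lt_of_lt_of_le Nat.zero_lt_one hN1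
    set D : Set (Fin m → ℝ) := {x | (∀ i, 0 < x i) ∧ ∑ i, x i < 1} with hD
    set f : (Fin m → ℝ) → ℝ := fun x =>
      (∏ i : Fin m, x i ^ (a N i.castSucc - 1))
        * (1 - ∑ i, x i) ^ (a N (Fin.last m) - 1) with hf
    have hZdef : dirichletZ m (a N) = ∫ x in D, f x := rfl
    have hDmeas : MeasurableSet D := by
      have hm1 : MeasurableSet {x : Fin m → ℝ | ∀ i, 0 < x i} := by
        rw [Set.setOf_forall]
        exact MeasurableSet.iInter fun i =>
          measurableSet_lt measurable_const (measurable_pi_apply i)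
      have hm2 : MeasurableSet {x : Fin m → ℝ | ∑ i, x i < 1} :=
        measurableSet_lt (by fun_prop) measurable_const
      exact hm1.inter hm2
    have hDsub : D ⊆ Set.pi Set.univ fun _ : Fin m => Set.Ioo (0:ℝ) 1 := by
      intro x hx i _
      refine ⟨hx.1 i, ?_⟩
      have h := Finset.single_le_sum (f := x) (fun j _ => (hx.1 j).le) (Finset.mem_univ i)
      linarith [hx.2]
    have hDvol : volume D ≤ 1 := by
      refine le_trans (measure_mono hDsub) ?_
      rw [volume_pi_pi]
      simp
    have hDfin : volume D ≠ ⊤ := (lt_of_le_of_lt hDvol ENNReal.one_lt_top).ne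
    have hfmeas : Measurable f := by
      apply Measurable.mul
      · exact Finset.measurable_prod _ fun i _ =>
          (Real.continuous_rpow_const (by linarith [hb i.castSucc])).measurable.comp
            (measurable_pi_apply i)
      · exact (Real.continuous_rpow_const (by linarith [hb (Fin.last m)])).measurable.comp
          (measurable_const.sub (by fun_prop))
    have hfexp : ∀ x ∈ D, f x =
        Real.exp (∑ i : Fin (m+1),
          (a N i - 1) * Real.log ((Fin.snoc x (1 - ∑ j, x j) : Fin (m+1) → ℝ) i)) := by
      intro x hx
      rw [hf]
      rw [Fin.sum_univ_castSucc]
      simp only [Fin.snoc_castSucc, Fin.snoc_last]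
      rw [Real.exp_add, Real.exp_sum]
      congr 1
      · exact Finset.prod_congr rfl fun i _ => by
          rw [Real.rpow_def_of_pos (hx.1 i), mul_comm]
      · rw [Real.rpow_def_of_pos (by linarith [hx.2]), mul_comm]
    set T : ℝ := ∑ i : Fin (m+1), (a N i - 1) * Real.log ((a N i - 1) / ∑ j, (a N j - 1))
      with hT
    have hfle : ∀ x ∈ D, f x ≤ Real.exp T := by
      intro x hx
      rw [hfexp x hx, Real.exp_le_exp]
      have hxpos : ∀ i, 0 < (Fin.snoc x (1 - ∑ j, x j) : Fin (m+1) → ℝ) i := by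
        intro i
        induction i using Fin.lastCases with
        | last => simpa using by linarith [hx.2]
        | cast i => simpa using hx.1 i
      have hxsum : ∑ i, (Fin.snoc x (1 - ∑ j, x j) : Fin (m+1) → ℝ) i ≤ 1 := by
        rw [Fin.sum_univ_castSucc]
        simp
      exact gibbs_ineq _ _ hβ hxpos hxsum
    have hfnn : ∀ x ∈ D, 0 ≤ f x := fun x hx => (hfexp x hx) ▸ (Real.exp_pos _).le
    have hint : IntegrableOn f D := by
      apply Measure.integrableOn_of_bounded hDfin hfmeas.aestronglyMeasurable (M := Real.exp T)
      rw [ae_restrict_iff' hDmeas]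
      exact ae_of_all _ fun x hx => by
        rw [Real.norm_eq_abs, abs_of_nonneg (hfnn x hx)]; exact hfle x hx
    -- upper bound on the integral
    have hup : ∫ x in D, f x ≤ Real.exp T := by
      have hb1 : ‖∫ x in D, f x‖ ≤ Real.exp T * (volume D).toReal :=
        norm_setIntegral_le_of_norm_le_const hDfin.lt_top fun x hx => by
          rw [Real.norm_eq_abs, abs_of_nonneg (hfnn x hx)]; exact hfle x hx
      have hb2 : (volume D).toReal ≤ 1 := by
        simpa using ENNReal.toReal_mono (by simp) hDvol
      calc ∫ x in D, f x ≤ ‖∫ x in D, f x‖ := le_abs_self _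
        _ ≤ Real.exp T * (volume D).toReal := hb1
        _ ≤ Real.exp T * 1 := by nlinarith [Real.exp_pos T, hb2,
            ENNReal.toReal_nonneg (a := volume D)]
        _ = Real.exp T := mul_one _
    -- lower bound: the small cube near the maximizer
    set C : Set (Fin m → ℝ) :=
      Set.pi Set.univ (fun i : Fin m => Set.Ioo (α i.castSucc / S - ε) (α i.castSucc / S))
      with hC
    have hsumfull : ∑ i : Fin m, α i.castSucc / S = 1 - α (Fin.last m) / S := by
      have hfull : ∑ i : Fin (m+1), α i / S = 1 := by
        rw [← Finset.sum_div]
        exact div_self hSpos.ne'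
      rw [Fin.sum_univ_castSucc] at hfull
      linarith
    have hCD : C ⊆ D := by
      intro x hx
      rw [hC, Set.mem_pi] at hx
      have hx1 : ∀ i, α i.castSucc / S - ε < x i := fun i => (hx i (Set.mem_univ i)).1
      have hx2 : ∀ i, x i < α i.castSucc / S := fun i => (hx i (Set.mem_univ i)).2
      refine ⟨fun i => by linarith [hεsmall i, hx1 i], ?_⟩
      have h3 : ∑ i, x i ≤ ∑ i : Fin m, α i.castSucc / S :=
        Finset.sum_le_sum fun i _ => (hx2 i).le
      rw [hsumfull] at h3
      have := div_pos (hαpos (Fin.last m)) hSpos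
      linarith
    have hCmeas : MeasurableSet C := MeasurableSet.univ_pi fun i => measurableSet_Ioo
    have hCvol : (volume C).toReal = ε ^ m := by
      rw [hC, volume_pi_pi]
      simp [Real.volume_Ioo, show ∀ i : Fin m, α i.castSucc / S - (α i.castSucc / S - ε) = ε
        from fun i => by ring, ENNReal.toReal_pow, ENNReal.toReal_ofReal hε0.le]
    have hCfin : volume C ≠ ⊤ := by
      rw [hC, volume_pi_pi]
      simp [Real.volume_Ioo]
    set c : ℝ := (∏ i : Fin m, (α i.castSucc / S - ε) ^ (a N i.castSucc - 1))
      * (α (Fin.last m) / S) ^ (a N (Fin.last m) - 1) with hc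
    have hbase : ∀ i : Fin m, 0 < α i.castSucc / S - ε := fun i => by linarith [hεsmall i]
    have hcpos : 0 < c := by
      apply mul_pos
      · exact Finset.prod_pos fun i _ => Real.rpow_pos_of_pos (hbase i) _
      · exact Real.rpow_pos_of_pos (div_pos (hαpos _) hSpos) _
    have hclef : ∀ x ∈ C, c ≤ f x := by
      intro x hx
      rw [hC, Set.mem_pi] at hx
      have hx1 : ∀ i, α i.castSucc / S - ε < x i := fun i => (hx i (Set.mem_univ i)).1
      have hx2 : ∀ i, x i < α i.castSucc / S := fun i => (hx i (Set.mem_univ i)).2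
      have h3 : α (Fin.last m) / S ≤ 1 - ∑ i, x i := by
        have := Finset.sum_le_sum (fun i (_ : i ∈ Finset.univ) => (hx2 i).le)
        rw [hsumfull] at this
        linarith
      rw [hf, hc]
      apply mul_le_mul
      · exact Finset.prod_le_prod (fun i _ => (Real.rpow_pos_of_pos (hbase i) _).le)
          (fun i _ => Real.rpow_le_rpow (hbase i).le (hx1 i).le (hβ i.castSucc).le)
      · exact Real.rpow_le_rpow (div_pos (hαpos _) hSpos).le h3 (hβ _).le
      · exact (Real.rpow_pos_of_pos (div_pos (hαpos _) hSpos) _).le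
      · exact Finset.prod_nonneg fun i _ => (Real.rpow_pos_of_pos
          (lt_trans (hbase i) (hx1 i)) _).le
    have hlow : c * ε ^ m ≤ ∫ x in D, f x := by
      calc c * ε ^ m = c * (volume C).toReal := by rw [hCvol]
        _ ≤ ∫ x in C, f x := setIntegral_ge_of_const_le_real hCmeas hCfin hclef (hint.mono_set hCD)
        _ ≤ ∫ x in D, f x := by
            apply setIntegral_mono_set hint
            · exact (ae_restrict_iff' hDmeas).mpr (ae_of_all _ hfnn)
            · exact HasSubset.Subset.eventuallyLE hCD
    have hlogc : Real.log c
        = (∑ i : Fin m, (a N i.castSucc - 1) * Real.log (α i.castSucc / S - ε))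
          + (a N (Fin.last m) - 1) * Real.log (α (Fin.last m) / S) := by
      rw [hc, Real.log_mul (Finset.prod_pos fun i _ => Real.rpow_pos_of_pos (hbase i) _).ne'
          (Real.rpow_pos_of_pos (div_pos (hαpos _) hSpos) _).ne',
        Real.log_prod (fun i _ => (Real.rpow_pos_of_pos (hbase i) _).ne'),
        Real.log_rpow (div_pos (hαpos _) hSpos)]
      congr 1
      exact Finset.sum_congr rfl fun i _ => Real.log_rpow (hbase i) _
    -- positivity of Z and the two log bounds
    have hZpos : 0 < dirichletZ m (a N) := by
      rw [hZdef]
      exact lt_of_lt_of_le (by positivity) hlow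
    have hup_log : Real.log (dirichletZ m (a N)) / (N:ℝ) ≤ u N := by
      have hlog : Real.log (dirichletZ m (a N)) ≤ T := by
        have := Real.log_le_log hZpos (hZdef ▸ hup)
        rwa [Real.log_exp] at this
      calc Real.log (dirichletZ m (a N)) / (N:ℝ) ≤ T / (N:ℝ) := by gcongr
        _ = u N := hTu N hN1
    have hlo_log : lo N ≤ Real.log (dirichletZ m (a N)) / (N:ℝ) := by
      have hlog : Real.log (c * ε ^ m) ≤ Real.log (dirichletZ m (a N)) :=
        Real.log_le_log (by positivity) (hZdef ▸ hlow)
      have hmul : Real.log (c * ε ^ m) = Real.log c + (m:ℝ) * Real.log ε := by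
        rw [Real.log_mul hcpos.ne' (pow_pos hε0 m).ne', Real.log_pow]
      have heq : (Real.log c + (m:ℝ) * Real.log ε) / (N:ℝ) = lo N := by
        rw [hlogc, hlo]
        simp only [add_div, Finset.sum_div, mul_div_right_comm]
      calc lo N = (Real.log c + (m:ℝ) * Real.log ε) / (N:ℝ) := heq.symm
        _ ≤ Real.log (dirichletZ m (a N)) / (N:ℝ) := by
            rw [hmul] at hlog
            gcongr
    rw [Real.dist_eq, abs_sub_lt_iff]
    constructor <;> linarith
  · intro h1
    rw [hL, h1]
    simp
end
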